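/- Let f be the transfer function of a pairwise exchange mechanism, i.e. assume that for every preference profile the matrix with entries 1/n + Σ_{j ≠ i} f(≻_i, ≻_j, a) is a doubly stochastic random assignment. Then f satisfies: (1) No transfers: f(≻, ≻, a) = 0 for all ≻ ∈ R and all objects a; (2) Balanced transfers: Σ_{a ∈ O} f(≻, ≻', a) = 0 for all ≻, ≻' ∈ R; (3) Anti-symmetry: f(≻, ≻', a) = −f(≻', ≻, a) for all ≻, ≻' ∈ R and all objects a; (4) Bounded range: f(≻, ≻', a) ∈ [−1/(n(n−1)), 1/(n(n−1))] for all ≻, ≻' ∈ R and all objects a. -/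

import Mathlib

open Finset

/-- A preference over `n` objects, encoded by its rank function:
`r a` is the (0-based) rank of object `a`; object `a` is strictly preferred to `b`
iff `r a < r b`.  The `k`-th ranked object (0-based) is `r.symm k`. -/
abbrev Pref (n : ℕ) := Fin n ≃ Fin n

/-- The total probability that allocation `p` assigns to the upper contour set of `a`
(the objects weakly preferred to `a`) under preference `r`. -/
def upperSum {n : ℕ} (r : Pref n) (p : Fin n → ℝ) (a : Fin n) : ℝ :=
  ∑ o ∈ Finset.univ.filter (fun o => r o ≤ r a), p o

/-- First-order stochastic dominance of `p` over `q` with respect to preference `r`. -/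
def StochDom {n : ℕ} (r : Pref n) (p q : Fin n → ℝ) : Prop :=
  ∀ a : Fin n, upperSum r q a ≤ upperSum r p a

/-- A random assignment: a doubly stochastic matrix. -/
def IsRandomAssignment {n : ℕ} (P : Matrix (Fin n) (Fin n) ℝ) : Prop :=
  (∀ i a, 0 ≤ P i a) ∧ (∀ i, ∑ a, P i a = 1) ∧ (∀ a, ∑ i, P i a = 1)

/-- A mechanism maps every preference profile to a random assignment. -/
def IsMechanism {n : ℕ} (φ : (Fin n → Pref n) → Matrix (Fin n) (Fin n) ℝ) : Prop :=
  ∀ prof, IsRandomAssignment (φ prof)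

/-- Strategy-proofness: no agent can ever benefit (in the stochastic dominance sense)
from misreporting her preference. -/
def StrategyProof {n : ℕ} (φ : (Fin n → Pref n) → Matrix (Fin n) (Fin n) ℝ) : Prop :=
  ∀ (prof : Fin n → Pref n) (i : Fin n) (r' : Pref n),
    StochDom (prof i) (φ prof i) (φ (Function.update prof i r') i)

/-- Envy-freeness: each agent's allocation stochastically dominates every other
agent's allocation with respect to her own preference. -/
def EnvyFree {n : ℕ} (φ : (Fin n → Pref n) → Matrix (Fin n) (Fin n) ℝ) : Prop :=
  ∀ (prof : Fin n → Pref n) (i j : Fin n), StochDom (prof i) (φ prof i) (φ prof j)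

/-- The pairwise exchange mechanism induced by a transfer function `f`. -/
noncomputable def phiF {n : ℕ} (f : Pref n → Pref n → Fin n → ℝ) (prof : Fin n → Pref n) :
    Matrix (Fin n) (Fin n) ℝ :=
  fun i a => 1 / (n : ℝ) + ∑ j ∈ Finset.univ.erase i, f (prof i) (prof j) a

/-- The transfer function takes values in `[-1/n, 1/n]`. -/
def TransferBounded {n : ℕ} (f : Pref n → Pref n → Fin n → ℝ) : Prop :=
  ∀ r r' a, -(1 / (n : ℝ)) ≤ f r r' a ∧ f r r' a ≤ 1 / (n : ℝ)

/-- Necessary properties of the transfer function of a (feasible) pairwise exchange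
mechanism: no transfers, balanced transfers, anti-symmetry and bounded range. -/
theorem transfer_function_properties (n : ℕ) (hn : 3 ≤ n)
    (f : Pref n → Pref n → Fin n → ℝ) (hf : TransferBounded f)
    (hmech : IsMechanism (phiF f)) :
    (∀ (r : Pref n) (a : Fin n), f r r a = 0) ∧
    (∀ r r' : Pref n, ∑ a, f r r' a = 0) ∧
    (∀ (r r' : Pref n) (a : Fin n), f r r' a = - f r' r a) ∧
    (∀ (r r' : Pref n) (a : Fin n),
      -(1 / ((n : ℝ) * ((n : ℝ) - 1))) ≤ f r r' a ∧
        f r r' a ≤ 1 / ((n : ℝ) * ((n : ℝ) - 1))) := by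
  have hn1 : 1 ≤ n := by omega
  have hn3 : (3:ℝ) ≤ (n:ℝ) := by exact_mod_cast hn
  have hnne : (n:ℝ) ≠ 0 := by linarith
  have hn1R : (n:ℝ) - 1 ≠ 0 := by linarith
  have hcast : ((n-1 : ℕ) : ℝ) = (n:ℝ) - 1 := by
    push_cast [Nat.cast_sub hn1]; ring
  have hcard : ∀ i : Fin n, (Finset.univ.erase i).card = n - 1 := by
    intro i
    rw [Finset.card_erase_of_mem (Finset.mem_univ i), Finset.card_univ, Fintype.card_fin]
  -- column sum identity
  have colsum : ∀ (prof : Fin n → Pref n) (a : Fin n),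
      ∑ i, ∑ j ∈ Finset.univ.erase i, f (prof i) (prof j) a = 0 := by
    intro prof a
    have h := (hmech prof).2.2 a
    simp only [phiF, Finset.sum_add_distrib, Finset.sum_const, Finset.card_univ,
      Fintype.card_fin, nsmul_eq_mul] at h
    have hone : (n:ℝ) * (1 / (n:ℝ)) = 1 := by field_simp
    linarith
  -- row sum identity
  have rowsum : ∀ (prof : Fin n → Pref n) (i : Fin n),
      ∑ a, ∑ j ∈ Finset.univ.erase i, f (prof i) (prof j) a = 0 := by
    intro prof i
    have h := (hmech prof).2.1 i
    simp only [phiF, Finset.sum_add_distrib, Finset.sum_const, Finset.card_univ,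
      Fintype.card_fin, nsmul_eq_mul] at h
    have hone : (n:ℝ) * (1 / (n:ℝ)) = 1 := by field_simp
    linarith
  -- (1) no transfers
  have h1 : ∀ (r : Pref n) (a : Fin n), f r r a = 0 := by
    intro r a
    have h := colsum (fun _ => r) a
    have hin : ∀ i ∈ (Finset.univ : Finset (Fin n)),
        ∑ j ∈ Finset.univ.erase i, f r r a = ((n:ℝ) - 1) * f r r a := by
      intro i _
      rw [Finset.sum_const, hcard i, nsmul_eq_mul, hcast]
    rw [Finset.sum_congr rfl hin, Finset.sum_const, Finset.card_univ, Fintype.card_fin,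
      nsmul_eq_mul, ← mul_assoc] at h
    have hne : (n:ℝ) * ((n:ℝ) - 1) ≠ 0 := mul_ne_zero hnne hn1R
    exact (mul_eq_zero.mp h).resolve_left hne
  -- distinguished agents
  let i0 : Fin n := ⟨0, by omega⟩
  -- (2) balanced transfers
  have h2 : ∀ r r' : Pref n, ∑ a, f r r' a = 0 := by
    intro r r'
    set prof : Fin n → Pref n := fun i => if i = i0 then r else r' with hprof
    have h := rowsum prof i0
    have hi0 : prof i0 = r := by simp [hprof]
    have hin : ∀ a ∈ (Finset.univ : Finset (Fin n)),
        ∑ j ∈ Finset.univ.erase i0, f (prof i0) (prof j) a = ((n:ℝ) - 1) * f r r' a := by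
      intro a _
      have : ∀ j ∈ Finset.univ.erase i0, f (prof i0) (prof j) a = f r r' a := by
        intro j hj
        have hjne := (Finset.mem_erase.mp hj).1
        simp [hprof, hjne]
      rw [Finset.sum_congr rfl this, Finset.sum_const, hcard i0, nsmul_eq_mul, hcast]
    rw [Finset.sum_congr rfl hin, ← Finset.mul_sum] at h
    exact (mul_eq_zero.mp h).resolve_left hn1R
  -- (3) anti-symmetry
  have h3 : ∀ (r r' : Pref n) (a : Fin n), f r r' a = - f r' r a := by
    intro r r' a
    set prof : Fin n → Pref n := fun i => if i = i0 then r' else r with hprof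
    have h := colsum prof a
    rw [← Finset.sum_erase_add _ _ (Finset.mem_univ i0)] at h
    have hterm : ∑ j ∈ Finset.univ.erase i0, f (prof i0) (prof j) a
        = ((n:ℝ) - 1) * f r' r a := by
      have : ∀ j ∈ Finset.univ.erase i0, f (prof i0) (prof j) a = f r' r a := by
        intro j hj
        have hjne := (Finset.mem_erase.mp hj).1
        simp [hprof, hjne]
      rw [Finset.sum_congr rfl this, Finset.sum_const, hcard i0, nsmul_eq_mul, hcast]
    have hrest : ∀ i ∈ Finset.univ.erase i0,
        ∑ j ∈ Finset.univ.erase i, f (prof i) (prof j) a = f r r' a := by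
      intro i hi
      have hine := (Finset.mem_erase.mp hi).1
      have hprofi : prof i = r := by simp [hprof, hine]
      have hi0mem : i0 ∈ Finset.univ.erase i := by
        exact Finset.mem_erase.mpr ⟨fun hh => hine hh.symm, Finset.mem_univ _⟩
      rw [← Finset.add_sum_erase _ _ hi0mem]
      have hz : ∀ j ∈ (Finset.univ.erase i).erase i0, f (prof i) (prof j) a = 0 := by
        intro j hj
        have hjne := (Finset.mem_erase.mp hj).1
        simp [hprof, hine, hjne, h1]
      rw [Finset.sum_congr rfl hz, Finset.sum_const, smul_zero, hprofi]
      simp [hprof]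
    rw [Finset.sum_congr rfl hrest, Finset.sum_const, hcard i0, nsmul_eq_mul, hcast,
      hterm] at h
    have : ((n:ℝ) - 1) * (f r r' a + f r' r a) = 0 := by ring_nf; ring_nf at h; linarith
    have := (mul_eq_zero.mp this).resolve_left hn1R
    linarith
  -- (4) bounded range (lower bound, then use anti-symmetry)
  have h4lo : ∀ (r r' : Pref n) (a : Fin n),
      -(1 / ((n:ℝ) * ((n:ℝ) - 1))) ≤ f r r' a := by
    intro r r' a
    set prof : Fin n → Pref n := fun i => if i = i0 then r else r' with hprof
    have h := (hmech prof).1 i0 a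
    have hterm : ∑ j ∈ Finset.univ.erase i0, f (prof i0) (prof j) a
        = ((n:ℝ) - 1) * f r r' a := by
      have : ∀ j ∈ Finset.univ.erase i0, f (prof i0) (prof j) a = f r r' a := by
        intro j hj
        have hjne := (Finset.mem_erase.mp hj).1
        simp [hprof, hjne]
      rw [Finset.sum_congr rfl this, Finset.sum_const, hcard i0, nsmul_eq_mul, hcast]
    simp only [phiF] at h
    rw [hterm] at h
    rw [neg_le, ← sub_nonneg]
    have key : 1 / ((n:ℝ) * ((n:ℝ) - 1)) = (1 / (n:ℝ)) / ((n:ℝ) - 1) := by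
      field_simp
    rw [key]
    have hpos : (0:ℝ) < (n:ℝ) - 1 := by linarith
    rw [div_sub' hn1R, div_nonneg_iff]
    left
    constructor
    · nlinarith
    · linarith
  refine ⟨h1, h2, h3, fun r r' a => ⟨h4lo r r' a, ?_⟩⟩
  have := h4lo r' r a
  rw [h3 r r' a]
  linarith
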